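/- For every natural number n ≥ 1 and real x with |x| ≠ 1, ∑_{l=0}^{n-1} 1/(1 − 2x·cos(π(l + 1/2)/n) + x²) = n(x^{2n} − 1)/((x² − 1)(x^{2n} + 1)). -/

import Mathlib

open Real Finset

private lemma key (n : ℕ) (hn : 1 ≤ n) (x : ℂ)
    (hc : 1 + x ^ (2 * n) ≠ 0)
    (hx2 : (1 : ℂ) - x ^ 2 ≠ 0)
    (hq : ∀ l ∈ Finset.range n,
      (1 : ℂ) - 2 * x * Complex.cos ((π : ℂ) * (l + 1 / 2) / n) + x ^ 2 ≠ 0) :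
    ∑ l ∈ Finset.range n,
        1 / (1 - 2 * x * Complex.cos ((π : ℂ) * (l + 1 / 2) / n) + x ^ 2) =
      n * (x ^ (2 * n) - 1) / ((x ^ 2 - 1) * (x ^ (2 * n) + 1)) := by
  have hn0 : (n : ℂ) ≠ 0 := Nat.cast_ne_zero.mpr (by omega)
  set A : ℂ → ℂ := fun t => Complex.exp ((π : ℂ) * (2 * t + 1) / (2 * n) * Complex.I) with hA
  have hA0 : ∀ t, A t ≠ 0 := fun t => Complex.exp_ne_zero _
  -- powers
  have hApow : ∀ l : ℕ, (A l) ^ (2 * n) = -1 := by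
    intro l
    rw [hA]; simp only
    rw [← Complex.exp_nat_mul]
    have h : ((2 * n : ℕ) : ℂ) * ((π : ℂ) * (2 * l + 1) / (2 * n) * Complex.I)
        = ((2 * l + 1 : ℕ) : ℂ) * ((π : ℂ) * Complex.I) := by
      push_cast; field_simp
    rw [h, Complex.exp_nat_mul, Complex.exp_pi_mul_I, Odd.neg_one_pow ⟨l, by ring⟩]
  -- geometric identity for each l
  have hgeom : ∀ l : ℕ, (1 - x * A l) * (∑ j ∈ Finset.range (2*n), (x * A l)^j)
      = 1 + x ^ (2*n) := by
    intro l
    have h := geom_sum_mul (x * A l) (2*n)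
    have h2 : (x * A l)^(2*n) = -x^(2*n) := by rw [mul_pow, hApow]; ring
    linear_combination (-1 : ℂ) * h - h2
  have hFne : ∀ l : ℕ, (1 - x * A l) ≠ 0 := by
    intro l h
    exact hc (by rw [← hgeom l, h, zero_mul])
  have hFl : ∀ l : ℕ, 1 / (1 - x * A l)
      = (∑ j ∈ Finset.range (2*n), (x * A l)^j) / (1 + x ^ (2*n)) := by
    intro l
    rw [eq_div_iff hc, ← hgeom l]
    field_simp [hFne l]
  -- sum swap: total double sum is 2n
  have hswap : ∑ l ∈ Finset.range (2*n), ∑ j ∈ Finset.range (2*n), (x * A l)^j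
      = (2*n : ℂ) := by
    rw [Finset.sum_comm]
    have hfact : ∀ l : ℕ, A l
        = Complex.exp ((π:ℂ)/(2*n) * Complex.I)
          * (Complex.exp ((π:ℂ)/n * Complex.I))^l := by
      intro l
      rw [hA]; simp only
      rw [← Complex.exp_nat_mul, ← Complex.exp_add]
      congr 1
      field_simp; ring
    have hmu : ∀ j : ℕ, 0 < j → j < 2*n →
        Complex.exp ((π:ℂ)/n * Complex.I) ^ j ≠ 1 := by
      intro j hj hj2 h
      rw [← Complex.exp_nat_mul, Complex.exp_eq_one_iff] at h
      obtain ⟨k, hk⟩ := h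
      have hpi : ((π:ℝ):ℂ) ≠ 0 := Complex.ofReal_ne_zero.mpr (ne_of_gt Real.pi_pos)
      have hjk : (j : ℂ) = 2 * (k:ℂ) * (n:ℂ) := by
        field_simp at hk
        have h2 : (j:ℂ) * ((π:ℂ) * Complex.I)
            = (2 * (k:ℂ) * (n:ℂ)) * ((π:ℂ) * Complex.I) := by linear_combination ((π:ℂ) * Complex.I) * hk
        exact mul_right_cancel₀ (mul_ne_zero hpi Complex.I_ne_zero) h2
      have hjk' : (j : ℤ) = 2 * k * (n : ℤ) := by exact_mod_cast hjk
      have hnZ : (0:ℤ) < (n:ℤ) := by exact_mod_cast (by omega : 0 < n)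
      have hjZ : (0:ℤ) < (j:ℤ) := by exact_mod_cast hj
      have hj2Z : (j:ℤ) < 2*(n:ℤ) := by exact_mod_cast hj2
      have hkpos : 0 < k := by
        by_contra hcon
        push_neg at hcon
        nlinarith
      nlinarith
    have hmu2n : Complex.exp ((π:ℂ)/n * Complex.I) ^ (2*n) = 1 := by
      rw [← Complex.exp_nat_mul]
      have : ((2*n : ℕ):ℂ) * ((π:ℂ)/n * Complex.I) = 2*(π:ℂ)*Complex.I := by
        push_cast; field_simp
      rw [this, Complex.exp_two_pi_mul_I]
    have hinner : ∀ j ∈ Finset.range (2*n),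
        ∑ l ∈ Finset.range (2*n), (x * A l)^j
          = if j = 0 then (2*n : ℂ) else 0 := by
      intro j hj
      rcases Nat.eq_zero_or_pos j with h0 | hpos
      · subst h0; simp
      · rw [if_neg (Nat.pos_iff_ne_zero.mp hpos)]
        have : ∀ l ∈ Finset.range (2*n), (x * A l)^j
            = (x^j * Complex.exp ((π:ℂ)/(2*n) * Complex.I)^j)
              * (Complex.exp ((π:ℂ)/n * Complex.I)^j)^l := by
          intro l _
          rw [hfact l, mul_pow, mul_pow, ← pow_mul, ← pow_mul, mul_comm j l]
          ring
        rw [Finset.sum_congr rfl this, ← Finset.mul_sum]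
        have hz : ∑ l ∈ Finset.range (2*n),
            (Complex.exp ((π:ℂ)/n * Complex.I)^j)^l = 0 := by
          rw [geom_sum_eq (hmu j hpos (Finset.mem_range.mp hj))]
          rw [← pow_mul, mul_comm j (2*n), pow_mul, hmu2n, one_pow]
          simp
        rw [hz, mul_zero]
    rw [Finset.sum_congr rfl hinner]
    simp
  -- sum of 1/(1-x a_l) over all 2n
  have hsumF : ∑ l ∈ Finset.range (2*n), 1/(1 - x * A l) = 2*n/(1 + x^(2*n)) := by
    calc ∑ l ∈ Finset.range (2*n), 1/(1 - x * A l)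
        = ∑ l ∈ Finset.range (2*n),
            (∑ j ∈ Finset.range (2*n), (x * A l)^j) / (1 + x ^ (2*n)) := by
          exact Finset.sum_congr rfl fun l _ => hFl l
      _ = (∑ l ∈ Finset.range (2*n), ∑ j ∈ Finset.range (2*n), (x * A l)^j)
            / (1 + x ^ (2*n)) := by rw [Finset.sum_div]
      _ = 2*n/(1 + x^(2*n)) := by rw [hswap]
  -- sum of (1+xa)/(1-xa)
  have hsumG : ∑ l ∈ Finset.range (2*n), (1 + x * A l)/(1 - x * A l)
      = 2*(2*n/(1 + x^(2*n))) - 2*n := by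
    have h1 : ∀ l ∈ Finset.range (2*n), (1 + x * A l)/(1 - x * A l)
        = 2 * (1/(1 - x * A l)) - 1 := by
      intro l _
      field_simp [hFne l]
      ring
    rw [Finset.sum_congr rfl h1, Finset.sum_sub_distrib, ← Finset.mul_sum, hsumF]
    simp [Finset.card_range]
  -- pairing
  set G : ℕ → ℂ := fun l => (1 + x * A l)/(1 - x * A l) with hG
  have hsplit : ∑ l ∈ Finset.range (2*n), G l
      = ∑ l ∈ Finset.range n, (G l + G (n + (n-1-l))) := by
    rw [two_mul, Finset.sum_range_add,
      ← Finset.sum_range_reflect (fun l => G (n + l)) n,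
      ← Finset.sum_add_distrib]
  have hpair : ∀ l ∈ Finset.range n, G l + G (n + (n-1-l))
      = 2*(1-x^2)/(1 - 2*x*Complex.cos ((π:ℂ)*((l:ℂ)+1/2)/n) + x^2) := by
    intro l hl
    have hln : l < n := Finset.mem_range.mp hl
    have hcast : ((n + (n - 1 - l) : ℕ) : ℂ) = 2*(n:ℂ) - 1 - (l:ℂ) := by
      have h1 : (n + (n - 1 - l) : ℕ) = 2*n - (1+l) := by omega
      rw [h1, Nat.cast_sub (by omega)]
      push_cast; ring
    have hAinv : A ((n + (n - 1 - l) : ℕ) : ℂ) = (A (l:ℂ))⁻¹ := by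
      rw [hcast, hA]; simp only
      rw [← Complex.exp_neg]
      rw [show (π:ℂ)*(2*(2*(n:ℂ)-1-(l:ℂ))+1)/(2*(n:ℂ))*Complex.I
          = 2*(π:ℂ)*Complex.I + -((π:ℂ)*(2*(l:ℂ)+1)/(2*(n:ℂ))*Complex.I) by
        field_simp
        try ring
        try tauto]
      rw [Complex.exp_add, Complex.exp_two_pi_mul_I, one_mul]
    have hcos : A (l:ℂ) + (A (l:ℂ))⁻¹ = 2 * Complex.cos ((π:ℂ)*((l:ℂ)+1/2)/n) := by
      rw [hA]; simp only
      rw [← Complex.exp_neg]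
      rw [show (π:ℂ)*(2*(l:ℂ)+1)/(2*(n:ℂ))*Complex.I
          = ((π:ℂ)*((l:ℂ)+1/2)/(n:ℂ))*Complex.I by
        field_simp
        try ring
        try tauto]
      rw [← neg_mul, Complex.exp_mul_I, Complex.exp_mul_I, Complex.cos_neg,
        Complex.sin_neg]
      ring
    have hinv : A (l:ℂ) * (A (l:ℂ))⁻¹ = 1 := mul_inv_cancel₀ (hA0 _)
    have hprod : (1 - x * A (l:ℂ)) * (1 - x * (A (l:ℂ))⁻¹)
        = 1 - 2*x*Complex.cos ((π:ℂ)*((l:ℂ)+1/2)/n) + x^2 := by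
      linear_combination (-x) * hcos + x^2 * hinv
    have hqne := hq l hl
    have hu : 1 - x * A (l:ℂ) ≠ 0 := hFne l
    have hv : 1 - x * (A (l:ℂ))⁻¹ ≠ 0 := by
      intro h; apply hqne; rw [← hprod, h, mul_zero]
    rw [hG]; simp only
    rw [hAinv, div_add_div _ _ hu hv, hprod]
    congr 1
    linear_combination (-2*x^2) * hinv
  -- assemble
  have h5 : ∑ l ∈ Finset.range n,
      2*(1-x^2)/(1 - 2*x*Complex.cos ((π:ℂ)*((l:ℂ)+1/2)/n) + x^2)
      = 2*(2*n/(1 + x^(2*n))) - 2*n := by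
    calc ∑ l ∈ Finset.range n,
          2*(1-x^2)/(1 - 2*x*Complex.cos ((π:ℂ)*((l:ℂ)+1/2)/n) + x^2)
        = ∑ l ∈ Finset.range n, (G l + G (n + (n-1-l))) :=
          (Finset.sum_congr rfl hpair).symm
      _ = ∑ l ∈ Finset.range (2*n), G l := hsplit.symm
      _ = 2*(2*n/(1 + x^(2*n))) - 2*n := hsumG
  have h6 : 2*(1-x^2) * ∑ l ∈ Finset.range n,
      1/(1 - 2*x*Complex.cos ((π:ℂ)*((l:ℂ)+1/2)/n) + x^2)
      = 2*(2*n/(1 + x^(2*n))) - 2*n := by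
    rw [Finset.mul_sum]
    rw [← h5]
    exact Finset.sum_congr rfl fun l _ => by rw [mul_one_div]
  have hc' : x^(2*n) + 1 ≠ 0 := by
    intro h; apply hc; linear_combination h
  have hx2' : x^2 - 1 ≠ 0 := by
    intro h; apply hx2; linear_combination (-1:ℂ) * h
  rw [show (∑ l ∈ Finset.range n,
      1/(1 - 2*x*Complex.cos ((π:ℂ)*((l:ℂ)+1/2)/n) + x^2))
      = (2*(2*(n:ℂ)/(1 + x^(2*n))) - 2*n) / (2*(1-x^2)) from by
    rw [eq_div_iff (mul_ne_zero two_ne_zero hx2), mul_comm]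
    exact h6]
  field_simp
  ring


theorem rational_cos_sum_shifted (n : ℕ) (hn : 1 ≤ n) (x : ℝ) (hx : |x| ≠ 1) :
    ∑ l ∈ Finset.range n, 1 / (1 - 2 * x * Real.cos (π * (l + 1 / 2) / n) + x ^ 2) =
      n * (x ^ (2 * n) - 1) / ((x ^ 2 - 1) * (x ^ (2 * n) + 1)) := by
  have hx1 : x ^ 2 ≠ 1 := by
    intro h
    apply hx
    have h1 : (|x| - 1) * (|x| + 1) = 0 := by
      have : |x| ^ 2 = 1 := by rw [sq_abs]; exact h
      nlinarith
    rcases mul_eq_zero.mp h1 with h2 | h2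
    · linarith
    · nlinarith [abs_nonneg x]
  have hpow : (0:ℝ) ≤ x ^ (2*n) := by
    rw [pow_mul]
    exact pow_nonneg (sq_nonneg x) n
  have hcR : (1:ℝ) + x ^ (2*n) ≠ 0 := by positivity
  have hqR : ∀ l ∈ Finset.range n,
      (1:ℝ) - 2 * x * Real.cos (π * (l + 1 / 2) / n) + x ^ 2 ≠ 0 := by
    intro l _ h
    set c := Real.cos (π * (l + 1 / 2) / n) with hcdef
    have hc1 : c ^ 2 ≤ 1 := Real.cos_sq_le_one _
    have h1 : (x - c) ^ 2 = 0 := by nlinarith [sq_nonneg (x - c)]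
    have h2 : x = c := by nlinarith [sq_nonneg (x - c)]
    apply hx1
    nlinarith
  have hcC : (1:ℂ) + (x:ℂ) ^ (2*n) ≠ 0 := by
    intro h
    apply hcR
    exact_mod_cast (by push_cast at h ⊢; exact_mod_cast h : ((1 + x^(2*n) : ℝ) : ℂ) = 0) |> Complex.ofReal_eq_zero.mp
  have hx2C : (1:ℂ) - (x:ℂ) ^ 2 ≠ 0 := by
    intro h
    apply hx1
    have : ((1 - x^2 : ℝ) : ℂ) = 0 := by push_cast; linear_combination h
    have h2 : (1 - x^2 : ℝ) = 0 := Complex.ofReal_eq_zero.mp this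
    linarith
  have hqC : ∀ l ∈ Finset.range n,
      (1:ℂ) - 2 * (x:ℂ) * Complex.cos ((π:ℂ) * ((l:ℂ) + 1 / 2) / (n:ℂ)) + (x:ℂ) ^ 2 ≠ 0 := by
    intro l hl h
    apply hqR l hl
    have : ((1 - 2 * x * Real.cos (π * (l + 1 / 2) / n) + x ^ 2 : ℝ) : ℂ) = 0 := by
      push_cast [Complex.ofReal_cos]
      linear_combination h
    exact_mod_cast this
  have hkey := key n hn (x:ℂ) hcC hx2C hqC
  have hcast : ((∑ l ∈ Finset.range n,
      1 / (1 - 2 * x * Real.cos (π * (l + 1 / 2) / n) + x ^ 2) : ℝ) : ℂ)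
      = ((n * (x ^ (2 * n) - 1) / ((x ^ 2 - 1) * (x ^ (2 * n) + 1)) : ℝ) : ℂ) := by
    push_cast [Complex.ofReal_cos]
    rw [hkey]
  exact_mod_cast hcast
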